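/- Let N ≥ 1 be an integer, ω = exp(2πi/N), and let x, y ∈ ℂ satisfy x^N + y^N = 1 with y ≠ 0. For a parameter u ∈ ℂ let w_{x,u} : ℤ → ℂ be the N-periodic function with w_{x,u}(0) = 1 and w_{x,u}(γ) = w_{x,u}(γ−1) · u/(1 − ω^γ x) for γ = 1, ..., N−1. Then for all integers ρ, ρ': ∑_{γ=0}^{N−1} w_{x,y}(γ − ρ) / w_{x, y/ω}(γ − ρ' − 1) equals (N/ω)(x/y)^{N−1} if ρ ≡ ρ' (mod N), and equals 0 otherwise. -/

import Mathlib

open Finset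

set_option maxHeartbeats 2000000 in
theorem one_site_pairing (N : ℕ) (hN : 1 ≤ N) (ω : ℂ)
    (hω : ω = Complex.exp (2 * (Real.pi : ℂ) * Complex.I / (N : ℂ)))
    (x y : ℂ) (hxy : x ^ N + y ^ N = 1) (hy : y ≠ 0)
    (wR wL : ℤ → ℂ)
    (hwRper : ∀ γ : ℤ, wR (γ + N) = wR γ) (hwR0 : wR 0 = 1)
    (hwR : ∀ γ : ℤ, 1 ≤ γ → γ ≤ (N : ℤ) - 1 →
      wR γ = wR (γ - 1) * (y / (1 - ω ^ γ * x)))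
    (hwLper : ∀ γ : ℤ, wL (γ + N) = wL γ) (hwL0 : wL 0 = 1)
    (hwL : ∀ γ : ℤ, 1 ≤ γ → γ ≤ (N : ℤ) - 1 →
      wL γ = wL (γ - 1) * ((y / ω) / (1 - ω ^ γ * x)))
    (ρ ρ' : ℤ) :
    ∑ γ ∈ Finset.range N, wR ((γ : ℤ) - ρ) / wL ((γ : ℤ) - ρ' - 1) =
      if (N : ℤ) ∣ (ρ - ρ') then ((N : ℂ) / ω) * (x / y) ^ (N - 1) else 0 := by
  classical
  have alg1 : ∀ (Y W p u v : ℂ) (B D : ℕ), Y ≠ 0 → W ≠ 0 → p ≠ 0 → u ≠ 0 → v ≠ 0 →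
      Y^B * Y^(D+1) / (p * u) / ((Y/W)^B / p) = Y^(D+1) / (u * v) * W^B * v := by
    intro Y W p u v B D h1 h2 h3 h4 h5
    rw [div_pow]
    field_simp
  have alg2 : ∀ (Y W p q : ℂ) (A B D M : ℕ), Y ≠ 0 → W ≠ 0 → p ≠ 0 → q ≠ 0 →
      Y ^ A * Y ^ M = Y ^ B * Y ^ (D+1) →
      Y ^ A / p / ((Y / W) ^ B / (p * q)) = Y ^ (D+1) / Y ^ M * W ^ B * q := by
    intro Y W p q A B D M h1 h2 h3 h4 h5
    rw [div_pow]
    field_simp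
    linear_combination h5
  have hN0 : 0 < N := hN
  have hNZpos : (0:ℤ) < (N:ℤ) := by exact_mod_cast hN0
  have hprim : IsPrimitiveRoot ω N := hω ▸ Complex.isPrimitiveRoot_exp N (by omega)
  have hω0 : ω ≠ 0 := by rw [hω]; exact Complex.exp_ne_zero _
  have hωN : ω ^ N = 1 := hprim.pow_eq_one
  have hωNz : ω ^ (N:ℤ) = 1 := by rw [zpow_natCast]; exact hωN
  -- congruence for zpow
  have hωcong : ∀ s t : ℤ, (N:ℤ) ∣ (s - t) → ω ^ s = ω ^ t := by
    rintro s t ⟨q, hq⟩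
    have hs : s = t + (N:ℤ) * q := by linarith
    rw [hs, zpow_add₀ hω0, zpow_mul, hωNz, one_zpow, mul_one]
  -- reduction of zpow to pow of reduced residue
  have hmodnn : ∀ z : ℤ, 0 ≤ z % (N:ℤ) := fun z => Int.emod_nonneg z (by omega)
  have hmodlt : ∀ z : ℤ, (z % (N:ℤ)).toNat < N := by
    intro z
    have h1 := hmodnn z
    have h2 := Int.emod_lt_of_pos z hNZpos
    omega
  have hmodcast : ∀ z : ℤ, (((z % (N:ℤ)).toNat : ℕ) : ℤ) = z % (N:ℤ) :=
    fun z => Int.toNat_of_nonneg (hmodnn z)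
  have hmoddvd : ∀ z : ℤ, (N:ℤ) ∣ (z - ((z % (N:ℤ)).toNat : ℤ)) := by
    intro z
    rw [hmodcast]
    refine ⟨z / N, ?_⟩
    have := Int.mul_ediv_add_emod z (N:ℤ)
    linarith
  -- geometric sum
  have hgeom : ∀ j : ℕ, j < N → (∑ γ ∈ range N, (ω^(j+1))^γ) = if j = N-1 then (N:ℂ) else 0 := by
    intro j hj
    by_cases h : j = N - 1
    · subst h
      have hNN : N - 1 + 1 = N := by omega
      rw [hNN, hωN, if_pos rfl]
      simp
    · have hdvd : ¬ N ∣ (j+1) := by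
        intro hdvd
        have := Nat.le_of_dvd (by omega) hdvd
        omega
      have hne1 : ω^(j+1) ≠ 1 := fun h1 => hdvd ((hprim.pow_eq_one_iff_dvd (j+1)).mp h1)
      rw [geom_sum_eq hne1, if_neg h]
      have hpow : (ω^(j+1))^N = 1 := by rw [← pow_mul, mul_comm, pow_mul, hωN, one_pow]
      rw [hpow]
      simp
  -- the product identity
  have hevalprod : ∀ z : ℂ, ∏ j ∈ range N, (1 - ω^j * z) = 1 - z^N := by
    intro z
    rcases eq_or_ne z 0 with rfl | hz
    · simp [hN0.ne']
    · have hpoly := X_pow_sub_C_eq_prod hprim hN0 (one_pow N)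
      have h2 : ∏ j ∈ range N, (z⁻¹ - ω^j) = (z⁻¹)^N - 1 := by
        have := congrArg (Polynomial.eval z⁻¹) hpoly
        simpa [Polynomial.eval_prod] using this.symm
      calc ∏ j ∈ range N, (1 - ω^j*z) = ∏ j ∈ range N, (z * (z⁻¹ - ω^j)) := by
            refine prod_congr rfl fun j _ => ?_
            field_simp
          _ = z^N * ((z⁻¹)^N - 1) := by
            rw [prod_mul_distrib, prod_const, card_range, h2]
          _ = 1 - z^N := by
            field_simp
            rw [one_div, inv_pow]
            field_simp
  have hyN : (1 : ℂ) - x^N = y^N := by linear_combination -hxy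
  have hyNne : y^N ≠ 0 := pow_ne_zero _ hy
  have hne : ∀ j ∈ range N, (1 - ω^j * x) ≠ 0 := by
    have hp : ∏ j ∈ range N, (1 - ω^j*x) ≠ 0 := by
      rw [hevalprod x, hyN]; exact hyNne
    exact fun j hj => prod_ne_zero_iff.mp hp j hj
  have hnen : ∀ j : ℕ, (1 - ω^j * x) ≠ 0 := by
    intro j
    have hj : j % N ∈ range N := mem_range.mpr (Nat.mod_lt _ hN0)
    have : ω ^ j = ω ^ (j % N) := by
      conv_lhs => rw [← Nat.div_add_mod j N]
      rw [pow_add, pow_mul, hωN, one_pow, one_mul]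
    rw [this]; exact hne _ hj
  have hnez : ∀ z : ℤ, (1 - ω ^ z * x) ≠ 0 := by
    intro z
    have : ω ^ z = ω ^ ((z % (N:ℤ)).toNat : ℕ) := by
      rw [← zpow_natCast ω ((z % (N:ℤ)).toNat)]
      exact hωcong _ _ (hmoddvd z)
    rw [this]; exact hnen _
  -- periodicity
  have hper : ∀ (f : ℤ → ℂ), (∀ γ:ℤ, f (γ + N) = f γ) → ∀ z : ℤ, f z = f ((z % (N:ℤ)).toNat : ℤ) := by
    intro f hf z
    have key : ∀ k : ℤ, ∀ w : ℤ, f (w + k * N) = f w := by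
      intro k
      induction k using Int.induction_on with
      | zero => simp
      | succ n ih =>
        intro w
        have h1 : w + ((n:ℤ)+1) * N = (w + n * N) + N := by ring
        rw [h1, hf, ih]
      | pred n ih =>
        intro w
        have h1 : w + (-(n:ℤ)-1) * N + N = w + (-(n:ℤ)) * N := by ring
        have := hf (w + (-(n:ℤ)-1) * N)
        rw [h1] at this
        rw [← this]
        exact ih w
    have hz : z = ((z % (N:ℤ)).toNat : ℤ) + (z / N) * N := by
      rw [hmodcast]
      have := Int.mul_ediv_add_emod z (N:ℤ)
      linarith
    conv_lhs => rw [hz]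
    exact key _ _
  -- the product Q s l = ∏_{k<l} (1 - ω^(s+k+1) x)
  set Q : ℤ → ℕ → ℂ := fun s l => ∏ k ∈ range l, (1 - ω ^ (s + k + 1) * x) with hQdef
  have hQne : ∀ s l, Q s l ≠ 0 := by
    intro s l
    exact prod_ne_zero_iff.mpr fun k _ => hnez _
  have hQsplit : ∀ (s : ℤ) (l1 l2 : ℕ), Q s (l1 + l2) = Q s l1 * Q (s + l1) l2 := by
    intro s l1 l2
    rw [hQdef]
    simp only []
    rw [prod_range_add]
    congr 1
    refine prod_congr rfl fun k _ => ?_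
    congr 2
    push_cast
    ring
  have hQcong : ∀ (s t : ℤ) (l : ℕ), (N:ℤ) ∣ (s - t) → Q s l = Q t l := by
    intro s t l hst
    refine prod_congr rfl fun k _ => ?_
    congr 2
    exact hωcong _ _ (by simpa using hst)
  have hQstep : ∀ s : ℤ, Q (s+1) N = Q s N := by
    intro s
    obtain ⟨M, hM⟩ : ∃ M, N = M + 1 := ⟨N-1, by omega⟩
    rw [hQdef]
    simp only []
    rw [hM, prod_range_succ, prod_range_succ']
    congr 1
    · refine prod_congr rfl fun k _ => ?_
      congr 2
      push_cast
      ring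
    · congr 2
      refine hωcong _ _ ⟨1, ?_⟩
      push_cast
      rw [hM]
      push_cast
      ring
  have hQall : ∀ s : ℤ, Q s N = Q 0 N := by
    intro s
    induction s using Int.induction_on with
    | zero => rfl
    | succ n ih => rw [← ih]; exact hQstep n
    | pred n ih => rw [← ih, ← hQstep (-(n:ℤ)-1)]; norm_num
  have hQfull : ∀ s : ℤ, Q s N = y ^ N := by
    intro s
    rw [hQall s, ← hQall (-1)]
    have : Q (-1) N = ∏ k ∈ range N, (1 - ω ^ (k:ℕ) * x) := by
      refine prod_congr rfl fun k _ => ?_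
      congr 2
      rw [← zpow_natCast ω k]
      congr 1
      ring
    rw [this, hevalprod, hyN]
  -- explicit values of wR and wL
  set P : ℕ → ℂ := fun a => Q 0 a with hPdef
  have hPne : ∀ a, P a ≠ 0 := fun a => hQne 0 a
  have hPsucc : ∀ n : ℕ, P (n+1) = P n * (1 - ω ^ ((n:ℤ)+1) * x) := by
    intro n
    rw [hPdef]
    simp only []
    rw [hQsplit 0 n 1, hQdef]
    simp only []
    rw [prod_range_one]
    congr 3
    push_cast
    ring
  have hwRval : ∀ a : ℕ, a < N → wR (a:ℤ) = y^a / P a := by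
    intro a
    induction a with
    | zero => intro _; simpa [hPdef, hQdef] using hwR0
    | succ n ih =>
      intro hlt
      have h1 := hwR ((n:ℤ)+1) (by omega) (by push_cast; omega)
      have h2 : ((n:ℤ)+1) - 1 = (n:ℤ) := by ring
      rw [h2] at h1
      have h3 : ((n+1 : ℕ) : ℤ) = (n:ℤ)+1 := by push_cast; ring
      rw [h3, h1, ih (by omega), hPsucc n]
      have hf := hnez ((n:ℤ)+1)
      field_simp
      ring
  have hwLval : ∀ a : ℕ, a < N → wL (a:ℤ) = (y/ω)^a / P a := by
    intro a
    induction a with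
    | zero => intro _; simpa [hPdef, hQdef] using hwL0
    | succ n ih =>
      intro hlt
      have h1 := hwL ((n:ℤ)+1) (by omega) (by push_cast; omega)
      have h2 : ((n:ℤ)+1) - 1 = (n:ℤ) := by ring
      rw [h2] at h1
      have h3 : ((n+1 : ℕ) : ℤ) = (n:ℤ)+1 := by push_cast; ring
      rw [h3, h1, ih (by omega), hPsucc n]
      have hf := hnez ((n:ℤ)+1)
      simp only [div_pow]
      field_simp
      ring
  have hPQ : ∀ a : ℕ, P a = Q 0 a := fun a => rfl
  clear_value Q P
  -- d and m
  set d : ℕ := ((ρ' - ρ) % (N:ℤ)).toNat with hd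
  have hdlt : d < N := hmodlt _
  set m : ℕ := N - 1 - d with hm
  have hdm : d + 1 + m = N := by omega
  have hddvd : (N:ℤ) ∣ ((ρ' - ρ) - d) := hmoddvd _
  have hd0 : ((N:ℤ) ∣ ρ - ρ') ↔ d = 0 := by
    constructor
    · intro hdv
      have hdv' : (N:ℤ) ∣ (ρ' - ρ) := (dvd_sub_comm).mp hdv
      have h1 : (ρ' - ρ) % (N:ℤ) = 0 := Int.emod_eq_zero_of_dvd hdv'
      rw [hd]
      omega
    · intro h0
      rw [hd] at h0
      have hnn := hmodnn (ρ' - ρ)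
      have h1 : (ρ' - ρ) % (N:ℤ) = 0 := by omega
      have h2 : (N:ℤ) ∣ (ρ' - ρ) := Int.dvd_of_emod_eq_zero h1
      exact (dvd_sub_comm).mp h2
  clear_value d m
  clear hd hm
  -- the key term computation
  have hterm : ∀ γ : ℕ, γ < N →
      wR ((γ:ℤ) - ρ) / wL ((γ:ℤ) - ρ' - 1)
        = y^(d+1) / y^N * ω ^ ((γ:ℤ) - ρ' - 1) * Q ((γ:ℤ) - ρ) m := by
    intro γ hγ
    set a : ℕ := (((γ:ℤ) - ρ) % (N:ℤ)).toNat with ha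
    set b : ℕ := (((γ:ℤ) - ρ' - 1) % (N:ℤ)).toNat with hb
    have halt : a < N := hmodlt _
    have hblt : b < N := hmodlt _
    have hca : (N:ℤ) ∣ (((γ:ℤ) - ρ) - a) := hmoddvd _
    have hcb : (N:ℤ) ∣ (((γ:ℤ) - ρ' - 1) - b) := hmoddvd _
    have hwa : wR ((γ:ℤ) - ρ) = y^a / P a := by
      rw [hper wR hwRper ((γ:ℤ) - ρ)]
      exact hwRval a halt
    have hwb : wL ((γ:ℤ) - ρ' - 1) = (y/ω)^b / P b := by
      rw [hper wL hwLper ((γ:ℤ) - ρ' - 1)]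
      exact hwLval b hblt
    have hωb : ω ^ ((γ:ℤ) - ρ' - 1) = ω ^ b := by
      rw [← zpow_natCast ω b]
      exact hωcong _ _ hcb
    have hQa : Q ((γ:ℤ) - ρ) m = Q (a:ℤ) m := hQcong _ _ _ hca
    clear_value a b
    clear ha hb
    -- the relation a ≡ b + d + 1 (mod N)
    have hab : (N:ℤ) ∣ ((a:ℤ) - ((b:ℤ) + d + 1)) := by
      obtain ⟨q1, e1⟩ := hca
      obtain ⟨q2, e2⟩ := hcb
      obtain ⟨q3, e3⟩ := hddvd
      exact ⟨-q1 + q2 + q3, by linarith⟩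
    have key : a = b + d + 1 ∨ a + N = b + d + 1 := by
      obtain ⟨q, hq⟩ := hab
      have hub : (N:ℤ) * q < (N:ℤ) * 1 := by
        rw [← hq, mul_one]
        push_cast
        omega
      have hlb : (N:ℤ) * (-2) < (N:ℤ) * q := by
        rw [← hq]
        push_cast
        omega
      have hq1 : q < 1 := lt_of_mul_lt_mul_left hub (by positivity)
      have hq2 : (-2:ℤ) < q := lt_of_mul_lt_mul_left hlb (by positivity)
      interval_cases q <;> omega
    rw [hwa, hwb, hωb, hQa]
    rcases key with hk | hk
    · -- a = b + d + 1 : P a = P b * Q b (d+1), Q b N = Q b (d+1) * Q a m = y^N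
      have hPa : P a = P b * Q ((b:ℤ)) (d+1) := by
        rw [hPQ, hPQ]
        have hk' : a = b + (d+1) := by omega
        rw [hk', hQsplit 0 b (d+1)]
        norm_num
      have hQbN : Q ((b:ℤ)) (d+1) * Q ((a:ℤ)) m = y ^ N := by
        have h1 : Q ((b:ℤ)) ((d+1) + m) = Q ((b:ℤ)) (d+1) * Q ((b:ℤ) + (d+1)) m :=
          hQsplit _ _ _
        have h2 : ((b:ℤ) + ((d:ℤ)+1)) = (a:ℤ) := by push_cast; omega
        rw [hdm] at h1
        rw [← hQfull (b:ℤ), h1]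
        congr 2
        push_cast at h2 ⊢
        omega
      have hQb1ne := hQne ((b:ℤ)) (d+1)
      have hyab : y ^ a = y ^ b * y ^ (d+1) := by
        rw [← pow_add]
        congr 1
        all_goals omega
      rw [hPa, hyab, ← hQbN]
      exact alg1 y ω (P b) (Q ((b:ℤ)) (d+1)) (Q ((a:ℤ)) m) b d hy hω0 (hPne b) hQb1ne (hQne _ m)
    · -- a + N = b + d + 1, i.e. b = a + m : P b = P a * Q a m
      have hb' : b = a + m := by omega
      have hPb : P b = P a * Q ((a:ℤ)) m := by
        rw [hPQ, hPQ]
        rw [hb', hQsplit 0 a m]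
        norm_num
      have hyab : y ^ a * y ^ N = y ^ b * y ^ (d+1) := by
        rw [← pow_add, ← pow_add]
        congr 1
        all_goals omega
      rw [hPb]
      exact alg2 y ω (P a) (Q ((a:ℤ)) m) a b d N hy hω0 (hPne a) (hQne _ m) hyab
  -- the polynomial G
  set G : Polynomial ℂ := ∏ k ∈ range m, (1 - Polynomial.C (ω^(k+1)) * Polynomial.X) with hG
  have hGdeg : G.natDegree ≤ m := by
    calc G.natDegree ≤ ∑ k ∈ range m, (1 - Polynomial.C (ω^(k+1)) * Polynomial.X).natDegree :=
          Polynomial.natDegree_prod_le _ _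
      _ ≤ ∑ _k ∈ range m, 1 := by
          refine sum_le_sum fun k _ => ?_
          have h := Polynomial.natDegree_linear_le (a := -(ω^(k+1))) (b := (1:ℂ))
          have he : (1 - Polynomial.C (ω^(k+1)) * Polynomial.X)
              = Polynomial.C (-(ω^(k+1))) * Polynomial.X + Polynomial.C 1 := by
            rw [map_neg, map_one]
            ring
          rw [he]
          exact h
      _ = m := by simp
  have hGdegN : G.natDegree < N := by omega
  have hQeval : ∀ s : ℤ, Q s m = G.eval (ω ^ s * x) := by
    intro s
    simp only [hQdef]
    rw [hG, Polynomial.eval_prod]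
    refine prod_congr rfl fun k _ => ?_
    simp only [Polynomial.eval_sub, Polynomial.eval_one, Polynomial.eval_mul,
      Polynomial.eval_C, Polynomial.eval_X]
    congr 1
    rw [show s + (k:ℤ) + 1 = ((k:ℤ)+1) + s by ring, zpow_add₀ hω0]
    rw [show ((k:ℤ)+1) = ((k+1:ℕ):ℤ) by push_cast; ring, zpow_natCast]
    ring
  -- per-term expansion
  have hterm2 : ∀ (γ j : ℕ), ω^((γ:ℤ)-ρ'-1) * (G.coeff j * (ω^((γ:ℤ)-ρ) * x)^j)
      = (G.coeff j * x^j * ω^(-ρ'-1) * ω^((-ρ)*(j:ℤ))) * (ω^(j+1))^γ := by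
    intro γ j
    have e1 : (ω^(j+1) : ℂ)^γ = ω^((((j+1)*γ : ℕ)):ℤ) := by
      rw [zpow_natCast, pow_mul]
    have e2 : ω^((γ:ℤ)-ρ'-1) = ω^((γ:ℤ)) * ω^(-ρ'-1) := by
      rw [← zpow_add₀ hω0]
      congr 1
      ring
    have e3 : (ω^((γ:ℤ)-ρ))^j = ω^(((γ:ℤ)-ρ)*(j:ℤ)) := by
      rw [zpow_mul, zpow_natCast]
    have e4 : ω^(((γ:ℤ)-ρ)*(j:ℤ)) = ω^((γ:ℤ)*(j:ℤ)) * ω^((-ρ)*(j:ℤ)) := by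
      rw [← zpow_add₀ hω0]
      congr 1
      ring
    have e5 : ω^((γ:ℤ)) * ω^((γ:ℤ)*(j:ℤ)) = ω^((((j+1)*γ : ℕ)):ℤ) := by
      rw [← zpow_add₀ hω0]
      congr 1
      push_cast
      ring
    rw [mul_pow, e2, e3, e4, e1, ← e5]
    ring
  -- swap sums and evaluate
  have hswap : ∑ γ ∈ range N, ω^((γ:ℤ)-ρ'-1) * Q ((γ:ℤ)-ρ) m
      = ∑ j ∈ range N, (G.coeff j * x^j * ω^(-ρ'-1) * ω^((-ρ)*(j:ℤ)))
          * ∑ γ ∈ range N, (ω^(j+1))^γ := by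
    calc ∑ γ ∈ range N, ω^((γ:ℤ)-ρ'-1) * Q ((γ:ℤ)-ρ) m
        = ∑ γ ∈ range N, ∑ j ∈ range N,
            ω^((γ:ℤ)-ρ'-1) * (G.coeff j * (ω^((γ:ℤ)-ρ) * x)^j) := by
          refine sum_congr rfl fun γ _ => ?_
          rw [hQeval, Polynomial.eval_eq_sum_range' hGdegN, mul_sum]
      _ = ∑ j ∈ range N, ∑ γ ∈ range N,
            ω^((γ:ℤ)-ρ'-1) * (G.coeff j * (ω^((γ:ℤ)-ρ) * x)^j) := sum_comm
      _ = _ := by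
          refine sum_congr rfl fun j _ => ?_
          rw [mul_sum]
          exact sum_congr rfl fun γ _ => hterm2 γ j
  have hsum2 : ∑ γ ∈ range N, ω^((γ:ℤ)-ρ'-1) * Q ((γ:ℤ)-ρ) m
      = (G.coeff (N-1) * x^(N-1) * ω^(-ρ'-1) * ω^((-ρ)*(((N-1:ℕ)):ℤ))) * N := by
    rw [hswap]
    rw [Finset.sum_eq_single_of_mem (N-1) (mem_range.mpr (by omega))]
    · rw [hgeom (N-1) (by omega), if_pos rfl]
    · intro j hj hjne
      rw [hgeom j (mem_range.mp hj), if_neg hjne, mul_zero]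
  have hstep1 : ∑ γ ∈ range N, wR ((γ:ℤ) - ρ) / wL ((γ:ℤ) - ρ' - 1)
      = (y^(d+1)/y^N) * ∑ γ ∈ range N, ω^((γ:ℤ)-ρ'-1) * Q ((γ:ℤ)-ρ) m := by
    rw [mul_sum]
    refine sum_congr rfl fun γ hγ => ?_
    rw [hterm γ (mem_range.mp hγ), mul_assoc]
  rw [hstep1, hsum2]
  by_cases hdvd : (N:ℤ) ∣ (ρ - ρ')
  · rw [if_pos hdvd]
    have hd' : d = 0 := hd0.mp hdvd
    subst hd'
    have hmN : m = N - 1 := by omega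
    -- coefficient is 1
    have hGX : G * (1 - Polynomial.X) = 1 - Polynomial.X^N := by
      have h1 : ∏ k ∈ range N, (1 - Polynomial.C (ω^k) * Polynomial.X)
          = 1 - Polynomial.X^N := by
        apply Polynomial.funext
        intro r
        rw [Polynomial.eval_prod]
        simp only [Polynomial.eval_sub, Polynomial.eval_one, Polynomial.eval_mul,
          Polynomial.eval_C, Polynomial.eval_X, Polynomial.eval_pow]
        exact hevalprod r
      rw [← h1]
      obtain ⟨M, hM⟩ : ∃ M, N = M+1 := ⟨N-1, by omega⟩
      rw [hM, prod_range_succ']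
      congr 1
      · rw [hG, hmN, hM]
        simp
      · simp
    have hGN : G.coeff N = 0 := Polynomial.coeff_eq_zero_of_natDegree_lt hGdegN
    have hc : (G * (1 - Polynomial.X)).coeff N = G.coeff N - G.coeff (N-1) := by
      rw [mul_one_sub, Polynomial.coeff_sub]
      congr 1
      conv_lhs => rw [show N = (N-1)+1 by omega]
      rw [Polynomial.coeff_mul_X]
    have hc2 : ((1 : Polynomial ℂ) - Polynomial.X^N).coeff N = -1 := by
      rw [Polynomial.coeff_sub, Polynomial.coeff_one, Polynomial.coeff_X_pow]
      simp [hN0.ne']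
    have hGc : G.coeff (N-1) = 1 := by
      have := congrArg (fun p => Polynomial.coeff p N) hGX
      rw [hc, hc2, hGN] at this
      linear_combination -this
    -- the ω part
    have hωpart : ω^(-ρ'-1 : ℤ) * ω^((-ρ)*(((N-1:ℕ)):ℤ)) = ω⁻¹ := by
      rw [← zpow_add₀ hω0]
      have : ω^(-1 : ℤ) = ω⁻¹ := zpow_neg_one ω
      rw [← this]
      apply hωcong
      obtain ⟨q, hq⟩ := hdvd
      refine ⟨q - ρ, ?_⟩
      have hc3 : (((N-1:ℕ)):ℤ) = (N:ℤ) - 1 := by push_cast [hN]; ring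
      rw [hc3]
      linarith
    rw [hGc]
    rw [show (1:ℂ) * x^(N-1) * ω^(-ρ'-1:ℤ) * ω^((-ρ)*(((N-1:ℕ)):ℤ)) * N
        = x^(N-1) * (ω^(-ρ'-1:ℤ) * ω^((-ρ)*(((N-1:ℕ)):ℤ))) * N by ring, hωpart]
    have hyNsplit : y^N = y^(N-1) * y := by
      conv_lhs => rw [show N = (N-1)+1 by omega]
      rw [pow_succ]
    have hy1ne : (y:ℂ)^(N-1) ≠ 0 := pow_ne_zero _ hy
    rw [div_pow, hyNsplit]
    field_simp
    ring
  · rw [if_neg hdvd]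
    have hd' : d ≠ 0 := fun h => hdvd (hd0.mpr h)
    have hGc : G.coeff (N-1) = 0 := by
      apply Polynomial.coeff_eq_zero_of_natDegree_lt
      omega
    rw [hGc]
    ring
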